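/- arXiv:2408.02366 — 6 statements merged into one kernel-verified Lean document; each statement's English description precedes it below -/
import Mathlib

section
/- A congruence C on the tropical Laurent polynomial semiring T[X₁^±, …, Xₙ^±] is proper if and only if (f, -∞) ∈ C implies f = -∞. -/
noncomputable section

open Tropical

/-- The tropical semifield `T = ℝ ∪ {-∞}` with ⊕ = max and ⊙ = +, realized as the
tropicalization of the order dual of `ℝ` with a top element adjoined (so that the
Mathlib min-plus convention becomes max-plus, and `0 = -∞`). -/
abbrev T : Type := Tropical (WithTop ℝᵒᵈ)

/-- The tropical Laurent polynomial semiring `T[X₁^±, …, Xₙ^±]`. -/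
abbrev TLaurent (n : ℕ) : Type := AddMonoidAlgebra T (Fin n → ℤ)

/-- Evaluation of a tropical Laurent polynomial at a point of `ℝⁿ`:
the tropical sum (max) over the terms `c ⊙ X^⊙m` of `c + ⟨m, x⟩`. -/
noncomputable def teval {n : ℕ} (f : TLaurent n) (x : Fin n → ℝ) : T :=
  f.coeff.sum fun m c => c * trop (↑(OrderDual.toDual (∑ i, (m i : ℝ) * x i)) : WithTop ℝᵒᵈ)

/-- A congruence `C` on the tropical Laurent polynomial semiring is proper (not the
full relation) if and only if `(f, -∞) ∈ C` implies `f = -∞` (here `-∞` is the zero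
element). -/
theorem ringCon_proper_iff (n : ℕ) (C : RingCon (TLaurent n)) :
    (¬ ∀ a b : TLaurent n, C a b) ↔ (∀ f : TLaurent n, C f 0 → f = 0) := by
  constructor
  · intro hproper f hf
    by_contra hfne
    apply hproper
    -- f has a nonzero coefficient c at some monomial m
    obtain ⟨m, hm⟩ : ∃ m, f.coeff m ≠ 0 := by
      by_contra h
      push_neg at h
      exact hfne (AddMonoidAlgebra.ext (Finsupp.ext fun a => h a))
    set c : T := f.coeff m with hc
    -- c = trop r for some real r
    have hct : untrop c ≠ (⊤ : WithTop ℝᵒᵈ) := by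
      intro h
      apply hm
      have : untrop c = untrop (0 : T) := by rw [h, untrop_zero]
      exact untrop_injective this
    obtain ⟨r, hr⟩ := WithTop.ne_top_iff_exists.mp hct
    -- inverse of c
    set c' : T := trop ((-r : ℝᵒᵈ) : WithTop ℝᵒᵈ) with hc'
    have hcc : c' * c = 1 := by
      apply untrop_injective
      rw [untrop_mul, ← hr]
      show ((-r : ℝᵒᵈ) : WithTop ℝᵒᵈ) + (r : WithTop ℝᵒᵈ) = untrop 1
      rw [← WithTop.coe_add, neg_add_cancel, untrop_one]
      rfl
    -- g = (c' X^{-m}) * f satisfies C g 0 and g 0 = 1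
    set u : TLaurent n := AddMonoidAlgebra.single (-m) c' with hu
    set g : TLaurent n := u * f with hg
    have hCg : C g 0 := by
      have := C.mul (C.refl u) hf
      rwa [mul_zero] at this
    have hg0 : g.coeff 0 = 1 := by
      rw [hg, hu, AddMonoidAlgebra.coeff_single_mul_apply, neg_neg, add_zero, ← hc, hcc]
    -- g + 1 = g since tropical addition is idempotent
    have hgadd : g + 1 = g := by
      have h1 : (1 : TLaurent n) = AddMonoidAlgebra.single 0 1 := rfl
      ext a
      rw [AddMonoidAlgebra.coeff_add, Finsupp.add_apply, h1, AddMonoidAlgebra.coeff_single]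
      rcases eq_or_ne a 0 with rfl | ha
      · rw [Finsupp.single_apply, if_pos rfl, hg0, Tropical.add_self]
      · rw [Finsupp.single_apply, if_neg (Ne.symm ha), add_zero]
    -- hence C 1 0
    have hC10 : C (1 : TLaurent n) 0 := by
      have h2 := C.add hCg (C.refl 1)
      rw [hgadd, zero_add] at h2
      exact C.trans (C.symm h2) hCg
    -- hence full
    intro a b
    have ha : C a 0 := by
      have := C.mul (C.refl a) hC10
      rwa [mul_one, mul_zero] at this
    have hb : C b 0 := by
      have := C.mul (C.refl b) hC10
      rwa [mul_one, mul_zero] at this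
    exact C.trans ha (C.symm hb)
  · intro h hfull
    have h10 := h 1 (hfull 1 0)
    exact one_ne_zero h10
end
end

section
/- Let P be a prime congruence on the tropical Laurent polynomial semiring T[X₁^±, …, Xₙ^±] (or on the tropical rational function semifield in n variables). Then the congruence variety V(P) = {x ∈ Rⁿ : f(x) = g(x) for all (f,g) ∈ P} contains at most one point. -/
noncomputable section

open Tropical

/-- A congruence `C` on a commutative semiring is prime if it is proper and the twisted
product `α ⋊ β := (α₁β₁ + α₂β₂, α₁β₂ + α₂β₁)` belonging to `C` forces `α ∈ C` or `β ∈ C`. -/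
def IsPrimeRingCon {S : Type*} [CommSemiring S] (C : RingCon S) : Prop :=
  (¬ ∀ a b : S, C a b) ∧
    ∀ a₁ a₂ b₁ b₂ : S, C (a₁ * b₁ + a₂ * b₂) (a₁ * b₂ + a₂ * b₁) → C a₁ a₂ ∨ C b₁ b₂

lemma teval_single' {n : ℕ} (m : Fin n → ℤ) (c : T) (x : Fin n → ℝ) :
    teval (AddMonoidAlgebra.single m c) x
      = c * trop (↑(OrderDual.toDual (∑ i, (m i : ℝ) * x i)) : WithTop ℝᵒᵈ) :=
  Finsupp.sum_single_index (zero_mul _)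

lemma teval_add' {n : ℕ} (f g : TLaurent n) (x : Fin n → ℝ) :
    teval (f + g) x = teval f x + teval g x :=
  by unfold teval; rw [AddMonoidAlgebra.coeff_add]
     exact Finsupp.sum_add_index' (fun _ => zero_mul _) (fun _ _ _ => add_mul _ _ _)

/-- constant -/
lemma teval_const {n : ℕ} (c : ℝ) (x : Fin n → ℝ) :
    teval (AddMonoidAlgebra.single (0 : Fin n → ℤ) (trop (↑(OrderDual.toDual c) : WithTop ℝᵒᵈ))) x
      = trop (↑(OrderDual.toDual c) : WithTop ℝᵒᵈ) := by
  rw [teval_single']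
  simp [trop_add]

lemma teval_var {n : ℕ} (i : Fin n) (x : Fin n → ℝ) :
    teval (AddMonoidAlgebra.single (Pi.single i 1 : Fin n → ℤ) (1 : T)) x
      = trop (↑(OrderDual.toDual (x i)) : WithTop ℝᵒᵈ) := by
  rw [teval_single', one_mul]
  congr 2
  simp [Pi.single_apply]

/-- The congruence variety of a prime congruence on the tropical Laurent polynomial
semiring contains at most one point. -/
theorem congruence_variety_of_prime_subsingleton (n : ℕ) (P : RingCon (TLaurent n))
    (hP : IsPrimeRingCon P) :
    Set.Subsingleton
      {x : Fin n → ℝ | ∀ f g : TLaurent n, P f g → teval f x = teval g x} := by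
  -- key step: no two points of the variety can satisfy x i < y i
  have key : ∀ x ∈ {x : Fin n → ℝ | ∀ f g : TLaurent n, P f g → teval f x = teval g x},
      ∀ y ∈ {x : Fin n → ℝ | ∀ f g : TLaurent n, P f g → teval f x = teval g x},
      ∀ i : Fin n, ¬ x i < y i := by
    intro x hx y hy i hlt
    set c : ℝ := (x i + y i) / 2 with hc
    have hxc : x i < c := by rw [hc]; linarith
    have hcy : c < y i := by rw [hc]; linarith
    set a : TLaurent n :=
      AddMonoidAlgebra.single (0 : Fin n → ℤ) (trop (↑(OrderDual.toDual c) : WithTop ℝᵒᵈ)) with ha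
    set b : TLaurent n := AddMonoidAlgebra.single (Pi.single i 1 : Fin n → ℤ) (1 : T) with hb
    have idem : ∀ f : TLaurent n, f + f = f := fun f => by
      ext m; rw [AddMonoidAlgebra.coeff_add, Finsupp.add_apply, add_self]
    have diag : a * b + (a + b) * (a + b) = a * (a + b) + (a + b) * b := by
      have e : (a + b) * (a + b) = a * b + (a * a + (b * a + b * b)) := by ring
      rw [e, ← add_assoc, idem, ← e]
      ring
    rcases hP.2 a (a + b) b (a + b) (by rw [diag]; exact P.refl _) with h | h
    · -- P a (a+b): evaluate at y
      have := hy _ _ h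
      rw [teval_add', teval_const, teval_var] at this
      -- this : trop c = trop c + trop (y i)  (tropical add = min in dual = max)
      have : (↑(OrderDual.toDual c) : WithTop ℝᵒᵈ)
          = min (↑(OrderDual.toDual c) : WithTop ℝᵒᵈ) (↑(OrderDual.toDual (y i))) :=
        congrArg untrop this
      rw [min_eq_right (by exact_mod_cast (OrderDual.toDual_le_toDual.mpr hcy.le))] at this
      exact absurd (WithTop.coe_injective this) (by simpa using hcy.ne)
    · -- P b (a+b): evaluate at x
      have := hx _ _ h
      rw [teval_add', teval_const, teval_var] at this
      have : (↑(OrderDual.toDual (x i)) : WithTop ℝᵒᵈ)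
          = min (↑(OrderDual.toDual c) : WithTop ℝᵒᵈ) (↑(OrderDual.toDual (x i))) :=
        congrArg untrop this
      rw [min_eq_left (by exact_mod_cast (OrderDual.toDual_le_toDual.mpr hxc.le))] at this
      exact absurd (WithTop.coe_injective this) (by simpa using hxc.ne)
  intro x hx y hy
  by_contra hne
  obtain ⟨i, hi⟩ := Function.ne_iff.mp hne
  rcases hi.lt_or_gt with h | h
  · exact key x hx y hy i h
  · exact key y hy x hx i h
end
end

section
/- Let S₁, S₂ be semifields over T. The pseudodirect product S₁ ⋈ S₂ := {(s₁,s₂) : s₁ ≠ 0, s₂ ≠ 0} ∪ {(0,0)}, with componentwise operations, is a semifield over T via the diagonal embedding t ↦ (t,t). -/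
noncomputable section

open Tropical

/-- Let `S₁`, `S₂` be semifields over `T` (commutative semirings with injective semiring
homomorphisms from `T`, in which every nonzero element is invertible). Then the
pseudodirect product `S₁ ⋈ S₂ = {(s₁,s₂) : s₁ ≠ 0, s₂ ≠ 0} ∪ {(0,0)}` with
componentwise operations is a semifield over `T` via the diagonal `t ↦ (τ₁ t, τ₂ t)`:
it contains `0`, `1`, the diagonal image of `T`, is closed under the componentwise
addition and multiplication, `1 ≠ 0`, and every nonzero element has an inverse in it. -/
theorem pseudodirect_product_is_semifield_over_T
    (S₁ S₂ : Type*) [CommSemiring S₁] [CommSemiring S₂]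
    (τ₁ : T →+* S₁) (τ₂ : T →+* S₂)
    (hτ₁ : Function.Injective τ₁) (hτ₂ : Function.Injective τ₂)
    (hinv₁ : ∀ a : S₁, a ≠ 0 → ∃ b, a * b = 1)
    (hinv₂ : ∀ a : S₂, a ≠ 0 → ∃ b, a * b = 1) :
    (0 : S₁ × S₂) ∈ {p : S₁ × S₂ | (p.1 ≠ 0 ∧ p.2 ≠ 0) ∨ p = 0} ∧
    (1 : S₁ × S₂) ∈ {p : S₁ × S₂ | (p.1 ≠ 0 ∧ p.2 ≠ 0) ∨ p = 0} ∧
    (∀ t : T, (τ₁ t, τ₂ t) ∈ {p : S₁ × S₂ | (p.1 ≠ 0 ∧ p.2 ≠ 0) ∨ p = 0}) ∧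
    (∀ p q : S₁ × S₂, ((p.1 ≠ 0 ∧ p.2 ≠ 0) ∨ p = 0) → ((q.1 ≠ 0 ∧ q.2 ≠ 0) ∨ q = 0) →
      ((p + q).1 ≠ 0 ∧ (p + q).2 ≠ 0) ∨ p + q = 0) ∧
    (∀ p q : S₁ × S₂, ((p.1 ≠ 0 ∧ p.2 ≠ 0) ∨ p = 0) → ((q.1 ≠ 0 ∧ q.2 ≠ 0) ∨ q = 0) →
      ((p * q).1 ≠ 0 ∧ (p * q).2 ≠ 0) ∨ p * q = 0) ∧
    (1 : S₁ × S₂) ≠ 0 ∧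
    (Function.Injective fun t : T => ((τ₁ t, τ₂ t) : S₁ × S₂)) ∧
    (∀ p : S₁ × S₂, ((p.1 ≠ 0 ∧ p.2 ≠ 0) ∨ p = 0) → p ≠ 0 →
      ∃ q : S₁ × S₂, (((q.1 ≠ 0 ∧ q.2 ≠ 0) ∨ q = 0) ∧ p * q = 1)) := by

  have hT : (1 : T) ≠ 0 := by
    intro h
    have := congrArg Tropical.untrop h
    simp [Tropical.untrop_one, Tropical.untrop_zero] at this
  have h1S₁ : (1 : S₁) ≠ 0 := fun h => hT (hτ₁ (by simpa using h))
  have h1S₂ : (1 : S₂) ≠ 0 := fun h => hT (hτ₂ (by simpa using h))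
  have hidem₁ : ∀ a : S₁, a + a = a := by
    intro a
    have h11 : (1 : S₁) + 1 = 1 := by
      have ht : ((1 : T) + 1) = 1 := Tropical.add_self 1
      calc (1 : S₁) + 1 = τ₁ 1 + τ₁ 1 := by simp
        _ = τ₁ (1 + 1) := (map_add τ₁ 1 1).symm
        _ = τ₁ 1 := by rw [ht]
        _ = 1 := by simp
    calc a + a = a * 1 + a * 1 := by rw [mul_one]
      _ = a * (1 + 1) := (mul_add a 1 1).symm
      _ = a := by rw [h11, mul_one]
  have hidem₂ : ∀ a : S₂, a + a = a := by
    intro a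
    have h11 : (1 : S₂) + 1 = 1 := by
      have ht : ((1 : T) + 1) = 1 := Tropical.add_self 1
      calc (1 : S₂) + 1 = τ₂ 1 + τ₂ 1 := by simp
        _ = τ₂ (1 + 1) := (map_add τ₂ 1 1).symm
        _ = τ₂ 1 := by rw [ht]
        _ = 1 := by simp
    calc a + a = a * 1 + a * 1 := by rw [mul_one]
      _ = a * (1 + 1) := (mul_add a 1 1).symm
      _ = a := by rw [h11, mul_one]
  have hadd₁ : ∀ a b : S₁, a + b = 0 → a = 0 := by
    intro a b h
    calc a = a + 0 := (add_zero a).symm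
      _ = a + (a + b) := by rw [h]
      _ = (a + a) + b := (add_assoc a a b).symm
      _ = a + b := by rw [hidem₁]
      _ = 0 := h
  have hadd₂ : ∀ a b : S₂, a + b = 0 → a = 0 := by
    intro a b h
    calc a = a + 0 := (add_zero a).symm
      _ = a + (a + b) := by rw [h]
      _ = (a + a) + b := (add_assoc a a b).symm
      _ = a + b := by rw [hidem₂]
      _ = 0 := h
  have hmul₁ : ∀ a b : S₁, a ≠ 0 → b ≠ 0 → a * b ≠ 0 := by
    intro a b ha hb h
    obtain ⟨c, hc⟩ := hinv₁ a ha
    apply hb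
    calc b = 1 * b := (one_mul b).symm
      _ = (a * c) * b := by rw [hc]
      _ = c * (a * b) := by ring
      _ = 0 := by rw [h, mul_zero]
  have hmul₂ : ∀ a b : S₂, a ≠ 0 → b ≠ 0 → a * b ≠ 0 := by
    intro a b ha hb h
    obtain ⟨c, hc⟩ := hinv₂ a ha
    apply hb
    calc b = 1 * b := (one_mul b).symm
      _ = (a * c) * b := by rw [hc]
      _ = c * (a * b) := by ring
      _ = 0 := by rw [h, mul_zero]
  refine ⟨Or.inr rfl, Or.inl ⟨h1S₁, h1S₂⟩, ?_, ?_, ?_, ?_, ?_, ?_⟩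
  · intro t
    by_cases ht : t = 0
    · right; simp [ht]
    · left
      constructor
      · intro h; exact ht (hτ₁ (by simpa using h))
      · intro h; exact ht (hτ₂ (by simpa using h))
  · rintro p q (⟨hp1, hp2⟩ | hp) (⟨hq1, hq2⟩ | hq)
    · left
      constructor
      · intro h; exact hp1 (hadd₁ _ _ h)
      · intro h; exact hp2 (hadd₂ _ _ h)
    · subst hq; simpa using Or.inl ⟨hp1, hp2⟩
    · subst hp; simpa using Or.inl ⟨hq1, hq2⟩
    · subst hp; subst hq; right; simp
  · rintro p q (⟨hp1, hp2⟩ | hp) (⟨hq1, hq2⟩ | hq)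
    · exact Or.inl ⟨hmul₁ _ _ hp1 hq1, hmul₂ _ _ hp2 hq2⟩
    · subst hq; right; simp
    · subst hp; right; simp
    · subst hp; right; simp
  · intro h
    exact h1S₁ (congrArg Prod.fst h)
  · intro s t h
    exact hτ₁ (congrArg Prod.fst h)
  · rintro p (⟨hp1, hp2⟩ | hp) hne
    · obtain ⟨b₁, hb₁⟩ := hinv₁ p.1 hp1
      obtain ⟨b₂, hb₂⟩ := hinv₂ p.2 hp2
      refine ⟨(b₁, b₂), Or.inl ⟨?_, ?_⟩, ?_⟩
      · intro h; simp only at h; apply h1S₁; rw [← hb₁, h, mul_zero]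
      · intro h; simp only at h; apply h1S₂; rw [← hb₂, h, mul_zero]
      · exact Prod.ext hb₁ hb₂
    · exact absurd hp hne
end
end

section
/- Let ψ : T(X₁,…,Xₙ) → S₁ ⋈ S₂ be a surjective T-algebra homomorphism from the tropical rational function semifield to a pseudodirect product of semifields over T, with ψᵢ = πᵢ ∘ ψ. Then V(Ker(ψ₁)) ∩ V(Ker(ψ₂)) = ∅. -/
noncomputable section

open Tropical

/-- Let `ψ` be a surjective `T`-algebra homomorphism from the tropical rational function
semifield in `n` variables (whose elements are functions `ℝⁿ → T`, modeled by a
commutative semiring `R` with an injective evaluation homomorphism `ev` into the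
semiring of functions, under which the `T`-algebra structure `τR` is by constants)
onto the pseudodirect product `S₁ ⋈ S₂` of semifields over `T`, and let `ψᵢ = πᵢ ∘ ψ`.
Then `V(Ker ψ₁) ∩ V(Ker ψ₂) = ∅`. -/
theorem congruence_varieties_of_factors_disjoint (n : ℕ)
    (R : Type*) [CommSemiring R]
    (ev : R →+* ((Fin n → ℝ) → T)) (hev : Function.Injective ev)
    (τR : T →+* R) (hconst : ∀ t : T, ev (τR t) = fun _ => t)
    (S₁ S₂ : Type*) [CommSemiring S₁] [CommSemiring S₂]
    (τ₁ : T →+* S₁) (τ₂ : T →+* S₂)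
    (hτ₁ : Function.Injective τ₁) (hτ₂ : Function.Injective τ₂)
    (hinv₁ : ∀ a : S₁, a ≠ 0 → ∃ b, a * b = 1)
    (hinv₂ : ∀ a : S₂, a ≠ 0 → ∃ b, a * b = 1)
    (ψ : R →+* S₁ × S₂) (hψτ : ∀ t : T, ψ (τR t) = (τ₁ t, τ₂ t))
    (hrange : ∀ r : R, ((ψ r).1 ≠ 0 ∧ (ψ r).2 ≠ 0) ∨ ψ r = 0)
    (hsurj : ∀ p : S₁ × S₂, ((p.1 ≠ 0 ∧ p.2 ≠ 0) ∨ p = 0) → ∃ r : R, ψ r = p) :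
    {x : Fin n → ℝ | ∀ a b : R, (ψ a).1 = (ψ b).1 → ev a x = ev b x} ∩
      {x : Fin n → ℝ | ∀ a b : R, (ψ a).2 = (ψ b).2 → ev a x = ev b x} = ∅ := by
  ext x
  simp only [Set.mem_inter_iff, Set.mem_setOf_eq, Set.mem_empty_iff_false, iff_false, not_and]
  intro hx₁ hx₂
  -- choose a constant t ≠ 0, 1 in T
  set t : T := trop ((1 : ℝᵒᵈ) : WithTop ℝᵒᵈ) with ht
  have ht0 : t ≠ 0 := by
    intro h
    have := congrArg untrop h
    simp [ht, untrop_zero] at this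
  have ht1 : t ≠ 1 := by
    intro h
    have := congrArg untrop h
    simp [ht, untrop_one] at this
  have hτ₁t : τ₁ t ≠ 0 := fun h => ht0 (hτ₁ (by simpa using h))
  have h12 : (1 : S₂) ≠ 0 := fun h => (one_ne_zero : (1:T) ≠ 0) (hτ₂ (by simpa using h))
  obtain ⟨r, hr⟩ := hsurj (τ₁ t, 1) (Or.inl ⟨hτ₁t, h12⟩)
  have e1 : ev r x = ev (1 : R) x := by
    apply hx₂
    simp [hr]
  have e2 : ev r x = ev (τR t) x := by
    apply hx₁
    rw [hr, hψτ]
  have hone : ev (1 : R) x = 1 := by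
    rw [show (1 : R) = τR 1 from (map_one τR).symm, hconst]
  have e2' : ev r x = t := by simpa [hconst] using e2
  exact ht1 (e2'.symm.trans (e1.trans hone))
end
end

section
/- In the setting of a surjective T-algebra homomorphism ψ from the tropical rational function semifield onto S₁ ⋈ S₂ with ψᵢ = πᵢ ∘ ψ: the congruence variety V(Ker(ψ)) is the disjoint union of V(Ker(ψ₁)) and V(Ker(ψ₂)). -/
noncomputable section

open Tropical

lemma aux_min (a b c d : WithTop ℝᵒᵈ) (hab : a < b) (hcd : c < d) :
    min (a + c) (b + d) < min (a + d) (b + c) := by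
  have ha : a ≠ ⊤ := (hab.trans_le le_top).ne
  have hc : c ≠ ⊤ := (hcd.trans_le le_top).ne
  exact (min_le_left _ _).trans_lt
    (lt_min (WithTop.add_lt_add_left ha hcd) (WithTop.add_lt_add_right hc hab))

lemma aux_trop (A₁ B₁ A₂ B₂ : T) (h1 : A₁ ≠ B₁) (h2 : A₂ ≠ B₂)
    (E : A₁ * A₂ + B₁ * B₂ = A₁ * B₂ + B₁ * A₂) : False := by
  have E' := congrArg untrop E
  simp only [untrop_add, untrop_mul] at E'
  have h1' : untrop A₁ ≠ untrop B₁ := fun h => h1 (untrop_injective h)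
  have h2' : untrop A₂ ≠ untrop B₂ := fun h => h2 (untrop_injective h)
  set a := untrop A₁; set b := untrop B₁; set c := untrop A₂; set d := untrop B₂
  rcases h1'.lt_or_gt with hab | hab <;> rcases h2'.lt_or_gt with hcd | hcd
  · exact (aux_min a b c d hab hcd).ne E'
  · exact (aux_min a b d c hab hcd).ne E'.symm
  · have := aux_min b a c d hab hcd
    rw [min_comm (b+c) (a+d), min_comm (b+d) (a+c)] at this
    exact this.ne E'.symm
  · have := aux_min b a d c hab hcd
    rw [min_comm (b+d) (a+c), min_comm (b+c) (a+d)] at this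
    exact this.ne E'



/-- Let `ψ` be a surjective `T`-algebra homomorphism from the tropical rational function
semifield in `n` variables (whose elements are functions `ℝⁿ → T`, modeled by a
commutative semiring `R` with an injective evaluation homomorphism `ev` into the
semiring of functions, under which the `T`-algebra structure `τR` is by constants)
onto the pseudodirect product `S₁ ⋈ S₂` of semifields over `T`, and let `ψᵢ = πᵢ ∘ ψ`.
Then the congruence variety `V(Ker ψ)` is the disjoint union of `V(Ker ψ₁)` and
`V(Ker ψ₂)`. -/
theorem congruence_variety_disjoint_union (n : ℕ)
    (R : Type*) [CommSemiring R]
    (ev : R →+* ((Fin n → ℝ) → T)) (hev : Function.Injective ev)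
    (τR : T →+* R) (hconst : ∀ t : T, ev (τR t) = fun _ => t)
    (S₁ S₂ : Type*) [CommSemiring S₁] [CommSemiring S₂]
    (τ₁ : T →+* S₁) (τ₂ : T →+* S₂)
    (hτ₁ : Function.Injective τ₁) (hτ₂ : Function.Injective τ₂)
    (hinv₁ : ∀ a : S₁, a ≠ 0 → ∃ b, a * b = 1)
    (hinv₂ : ∀ a : S₂, a ≠ 0 → ∃ b, a * b = 1)
    (ψ : R →+* S₁ × S₂) (hψτ : ∀ t : T, ψ (τR t) = (τ₁ t, τ₂ t))
    (hrange : ∀ r : R, ((ψ r).1 ≠ 0 ∧ (ψ r).2 ≠ 0) ∨ ψ r = 0)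
    (hsurj : ∀ p : S₁ × S₂, ((p.1 ≠ 0 ∧ p.2 ≠ 0) ∨ p = 0) → ∃ r : R, ψ r = p) :
    {x : Fin n → ℝ | ∀ a b : R, ψ a = ψ b → ev a x = ev b x} =
      {x : Fin n → ℝ | ∀ a b : R, (ψ a).1 = (ψ b).1 → ev a x = ev b x} ∪
        {x : Fin n → ℝ | ∀ a b : R, (ψ a).2 = (ψ b).2 → ev a x = ev b x} ∧
    {x : Fin n → ℝ | ∀ a b : R, (ψ a).1 = (ψ b).1 → ev a x = ev b x} ∩
      {x : Fin n → ℝ | ∀ a b : R, (ψ a).2 = (ψ b).2 → ev a x = ev b x} = ∅ := by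
  constructor
  · ext x
    simp only [Set.mem_setOf_eq, Set.mem_union]
    constructor
    · intro hx
      by_contra hor
      push_neg at hor
      obtain ⟨h₁, h₂⟩ := hor
      obtain ⟨a₁, b₁, e1, ne1⟩ := h₁
      obtain ⟨a₂, b₂, e2, ne2⟩ := h₂
      have key : ψ (a₁ * a₂ + b₁ * b₂) = ψ (a₁ * b₂ + b₁ * a₂) := by
        apply Prod.ext
        · simp only [map_add, map_mul, Prod.fst_add, Prod.fst_mul, e1]; try ring
        · simp only [map_add, map_mul, Prod.snd_add, Prod.snd_mul, e2]; try ring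
      have E := hx _ _ key
      simp only [map_add, map_mul, Pi.add_apply, Pi.mul_apply] at E
      exact aux_trop _ _ _ _ ne1 ne2 E
    · rintro (h | h) a b hab
      · exact h a b (by rw [hab])
      · exact h a b (by rw [hab])
  · ext x
    simp only [Set.mem_inter_iff, Set.mem_setOf_eq, Set.mem_empty_iff_false, iff_false,
      not_and]
    intro h1 h2
    set t : T := trop ((1 : ℝᵒᵈ) : WithTop ℝᵒᵈ) with ht
    have ht0 : t ≠ 0 := by
      intro h
      have := congrArg untrop h
      simp [ht, untrop_zero] at this
    have ht1 : t ≠ 1 := by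
      intro h
      have := congrArg untrop h
      simp only [ht, untrop_trop, untrop_one] at this
      exact one_ne_zero ((WithTop.coe_eq_zero).mp this)
    have hT10 : (1 : T) ≠ 0 := by
      intro h
      have := congrArg untrop h
      simp [untrop_one, untrop_zero] at this
    have hS2 : (1 : S₂) ≠ 0 := fun h => hT10 (hτ₂ (by rw [map_one, map_zero]; exact h))
    have hτ₁t : τ₁ t ≠ 0 := fun h => ht0 (hτ₁ (by rw [map_zero]; exact h))
    obtain ⟨r, hr⟩ := hsurj (τ₁ t, 1) (Or.inl ⟨hτ₁t, hS2⟩)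
    have e1 : ev r x = t := by
      have h' : (ψ r).1 = (ψ (τR t)).1 := by rw [hr, hψτ]
      have := h1 r (τR t) h'
      rw [hconst] at this
      exact this
    have e2 : ev r x = 1 := by
      have h' : (ψ r).2 = (ψ 1).2 := by rw [hr]; simp
      have := h2 r 1 h'
      simpa using this
    exact ht1 (by rw [← e1, e2])
end
end

section
/- Let ψᵢ (i = 1,2) be as in the pseudodirect product setting, and suppose Ker(ψᵢ) = E(V(Ker(ψᵢ))) for i = 1, 2, where E(W) is the congruence of all pairs of tropical rational functions agreeing on W. Then Ker(ψ) = E(V(Ker(ψ))). -/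
noncomputable section

open Tropical

/-- Let `ψ` be a surjective `T`-algebra homomorphism from the tropical rational function
semifield in `n` variables (elements modeled as functions `ℝⁿ → T` via an injective
evaluation homomorphism `ev`) onto the pseudodirect product `S₁ ⋈ S₂` of semifields
over `T`, with `ψᵢ = πᵢ ∘ ψ`. If `Ker(ψᵢ) = E(V(Ker ψᵢ))` for `i = 1, 2` (pairs are
related exactly when their evaluations agree on the congruence variety), then
`Ker(ψ) = E(V(Ker ψ))`. -/
theorem ker_eq_agreement_on_variety (n : ℕ)
    (R : Type*) [CommSemiring R]
    (ev : R →+* ((Fin n → ℝ) → T)) (hev : Function.Injective ev)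
    (τR : T →+* R) (hconst : ∀ t : T, ev (τR t) = fun _ => t)
    (S₁ S₂ : Type*) [CommSemiring S₁] [CommSemiring S₂]
    (τ₁ : T →+* S₁) (τ₂ : T →+* S₂)
    (hτ₁ : Function.Injective τ₁) (hτ₂ : Function.Injective τ₂)
    (hinv₁ : ∀ a : S₁, a ≠ 0 → ∃ b, a * b = 1)
    (hinv₂ : ∀ a : S₂, a ≠ 0 → ∃ b, a * b = 1)
    (ψ : R →+* S₁ × S₂) (hψτ : ∀ t : T, ψ (τR t) = (τ₁ t, τ₂ t))
    (hrange : ∀ r : R, ((ψ r).1 ≠ 0 ∧ (ψ r).2 ≠ 0) ∨ ψ r = 0)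
    (hsurj : ∀ p : S₁ × S₂, ((p.1 ≠ 0 ∧ p.2 ≠ 0) ∨ p = 0) → ∃ r : R, ψ r = p)
    (hE₁ : ∀ a b : R, (ψ a).1 = (ψ b).1 ↔
      ∀ x ∈ {x : Fin n → ℝ | ∀ a b : R, (ψ a).1 = (ψ b).1 → ev a x = ev b x},
        ev a x = ev b x)
    (hE₂ : ∀ a b : R, (ψ a).2 = (ψ b).2 ↔
      ∀ x ∈ {x : Fin n → ℝ | ∀ a b : R, (ψ a).2 = (ψ b).2 → ev a x = ev b x},
        ev a x = ev b x) :
    ∀ a b : R, ψ a = ψ b ↔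
      ∀ x ∈ {x : Fin n → ℝ | ∀ a b : R, ψ a = ψ b → ev a x = ev b x},
        ev a x = ev b x := by
  intro a b
  constructor
  · intro h x hx
    exact hx a b h
  · intro h
    have h1 : (ψ a).1 = (ψ b).1 :=
      (hE₁ a b).2 (fun x hx => h x (fun c d hcd => hx c d (by rw [hcd])))
    have h2 : (ψ a).2 = (ψ b).2 :=
      (hE₂ a b).2 (fun x hx => h x (fun c d hcd => hx c d (by rw [hcd])))
    exact Prod.ext h1 h2
end
end
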